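/- arXiv:2508.09961 — 2 statements merged into one kernel-verified Lean document; each statement's English description precedes it below -/
import Mathlib

section
/- Let $p$ be a prime, $q = p^r$, and $n \geq 2$. Then every Sylow $p$-subgroup of $PSL_n(\mathbb{F}_q)$ is isomorphic (as a group) to $\operatorname{Up}_n(\mathbb{F}_{p^r})$, the group of $n \times n$ unitriangular matrices over $\mathbb{F}_{p^r}$. -/
/-- A submonoid of a finite group is a subgroup. -/
def Submonoid.toSubgroupOfFinite {G : Type*} [Group G] [Finite G] (M : Submonoid G) :
    Subgroup G where
  carrier := M
  one_mem' := M.one_mem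
  mul_mem' := M.mul_mem
  inv_mem' := by
    intro a ha
    have h1 : a ^ orderOf a = 1 := pow_orderOf_eq_one a
    have h2 : 0 < orderOf a := orderOf_pos a
    have : a⁻¹ = a ^ (orderOf a - 1) := by
      rw [eq_comm, ← mul_eq_one_iff_eq_inv, ← pow_succ, Nat.sub_add_cancel h2, h1]
    rw [this]
    exact M.pow_mem ha _

@[simp] lemma Submonoid.mem_toSubgroupOfFinite {G : Type*} [Group G] [Finite G]
    (M : Submonoid G) (x : G) : x ∈ M.toSubgroupOfFinite ↔ x ∈ M := Iff.rfl

/-- The unitriangular matrix group as a subgroup of `GL n F`. -/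
def UpGroup (n : ℕ) (F : Type*) [Field F] [Fintype F] : Subgroup (GL (Fin n) F) :=
  Submonoid.toSubgroupOfFinite
  { carrier := {M : GL (Fin n) F | (∀ i j : Fin n, j < i → M.val i j = 0) ∧ ∀ i, M.val i i = 1}
    one_mem' := by
      constructor
      · intro i j hij
        rw [Units.val_one, Matrix.one_apply_ne (n := Fin n) (i := i) (j := j) (by rintro rfl; exact lt_irrefl i hij)]
      · intro i; rw [Units.val_one, Matrix.one_apply_eq]
    mul_mem' := by
      rintro A B ⟨hA1, hA2⟩ ⟨hB1, hB2⟩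
      constructor
      · intro i j hij
        show (A.val * B.val) i j = 0
        rw [Matrix.mul_apply]
        apply Finset.sum_eq_zero
        intro k _
        rcases lt_or_ge k i with hk | hk
        · rw [hA1 i k hk, zero_mul]
        · have : j < k := lt_of_lt_of_le hij hk
          rw [hB1 k j this, mul_zero]
      · intro i
        show (A.val * B.val) i i = 1
        rw [Matrix.mul_apply]
        rw [Finset.sum_eq_single i]
        · rw [hA2, hB2, one_mul]
        · intro k _ hk
          rcases lt_or_gt_of_ne hk with h | h
          · rw [hA1 i k h, zero_mul]
          · rw [hB1 k i h, mul_zero]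
        · intro h; exact absurd (Finset.mem_univ i) h }


section Aux

open Matrix

lemma mem_UpGroup {n : ℕ} {F : Type*} [Field F] [Fintype F] (M : GL (Fin n) F) :
    M ∈ UpGroup n F ↔ (∀ i j : Fin n, j < i → M.val i j = 0) ∧ ∀ i, M.val i i = 1 := Iff.rfl

/-- The strictly-upper-triangular index set. -/
abbrev UpIdx (n : ℕ) := {ij : Fin n × Fin n // ij.1 < ij.2}

/-- `UpIdx n` as a sigma type. -/
def upIdxEquiv (n : ℕ) : UpIdx n ≃ Σ j : Fin n, Fin j where
  toFun x := ⟨x.val.2, ⟨x.val.1, x.prop⟩⟩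
  invFun x := ⟨(⟨x.2.val, x.2.isLt.trans x.1.isLt⟩, x.1), by
    simpa [Fin.lt_def] using x.2.isLt⟩
  left_inv x := by
    rcases x with ⟨⟨i, j⟩, h⟩
    simp
  right_inv x := by
    rcases x with ⟨j, k⟩
    simp

lemma card_upIdx (n : ℕ) : Nat.card (UpIdx n) = ∑ j : Fin n, (j : ℕ) := by
  rw [Nat.card_congr (upIdxEquiv n), Nat.card_eq_fintype_card, Fintype.card_sigma]
  simp

variable (n : ℕ) (F : Type*) [Field F] [Fintype F]

/-- The matrix associated to a tuple of strictly upper entries. -/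
def upMat (f : UpIdx n → F) : Matrix (Fin n) (Fin n) F :=
  Matrix.of fun i j => if i = j then 1 else if h : i < j then f ⟨(i, j), h⟩ else 0

variable {n F}

lemma upMat_bt (f : UpIdx n → F) : (upMat n F f).BlockTriangular id := by
  intro i j hij
  have hij' : (j : Fin n) < i := hij
  simp [upMat, hij'.ne', hij'.asymm]

lemma upMat_det (f : UpIdx n → F) : (upMat n F f).det = 1 := by
  rw [Matrix.det_of_upperTriangular (upMat_bt f)]
  apply Finset.prod_eq_one
  intro i _
  simp [upMat]

lemma upMat_isUnit (f : UpIdx n → F) : IsUnit (upMat n F f) :=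
  (Matrix.isUnit_iff_isUnit_det _).mpr (by rw [upMat_det]; exact isUnit_one)

/-- The unitriangular group is parametrized by its strictly upper entries. -/
noncomputable def upGroupEquiv : UpGroup n F ≃ (UpIdx n → F) where
  toFun M ij := M.val.val ij.val.1 ij.val.2
  invFun f :=
    ⟨(upMat_isUnit f).unit, by
      rw [mem_UpGroup]
      refine ⟨fun i j hij => ?_, fun i => ?_⟩
      · rw [(upMat_isUnit f).unit_spec]
        simp [upMat, hij.ne', hij.asymm]
      · rw [(upMat_isUnit f).unit_spec]
        simp [upMat]⟩
  left_inv M := by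
    rcases M with ⟨M, hM⟩
    rw [mem_UpGroup] at hM
    apply Subtype.ext
    apply Units.ext
    dsimp only
    rw [IsUnit.unit_spec]
    ext i j
    rcases lt_trichotomy i j with h | h | h
    · simp [upMat, h.ne, h]
    · simp [upMat, h, (hM.2 j).symm]
    · simp [upMat, h.ne', h.asymm, (hM.1 i j h).symm]
  right_inv f := by
    funext ij
    rcases ij with ⟨⟨i, j⟩, h⟩
    dsimp only
    rw [IsUnit.unit_spec]
    have h' : i < j := h
    simp [upMat, h'.ne, h']

end Aux
section Main

open Matrix Subgroup

lemma card_GL_eq (n : ℕ) (F : Type*) [Field F] [Fintype F] :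
    Nat.card (GL (Fin n) F) =
      (Fintype.card F) ^ (∑ j : Fin n, (j : ℕ)) *
        ∏ i : Fin n, ((Fintype.card F) ^ (n - (i : ℕ)) - 1) := by
  set q := Fintype.card F with hq
  rw [Matrix.card_GL_field]
  have key : ∀ i : Fin n, q ^ n - q ^ (i : ℕ) = q ^ (i : ℕ) * (q ^ (n - (i : ℕ)) - 1) := by
    intro i
    have hi : (i : ℕ) ≤ n := i.isLt.le
    rw [Nat.mul_sub, mul_one, ← pow_add, Nat.add_sub_cancel' hi]
  rw [Finset.prod_congr rfl (fun i _ => key i), Finset.prod_mul_distrib,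
    Finset.prod_pow_eq_pow_sum]

lemma coprime_K (p r n : ℕ) (hp : p.Prime) (hr : 1 ≤ r)
    (F : Type*) [Field F] [Fintype F] (hF : Fintype.card F = p ^ r) :
    Nat.Coprime p (∏ i : Fin n, ((Fintype.card F) ^ (n - (i : ℕ)) - 1)) := by
  rw [Nat.coprime_prod_right_iff]
  intro i _
  have hi : 1 ≤ n - (i : ℕ) := by have := i.isLt; omega
  have hq : 0 < Fintype.card F := Fintype.card_pos
  rw [hp.coprime_iff_not_dvd]
  intro hdvd
  have h1 : p ∣ (Fintype.card F) ^ (n - (i : ℕ)) := by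
    rw [hF, ← pow_mul]
    exact dvd_pow_self p (by positivity)
  have h2 : 0 < (Fintype.card F) ^ (n - (i : ℕ)) := by positivity
  have h3 : p ∣ 1 := by
    have := Nat.dvd_sub h1 hdvd
    rwa [Nat.sub_sub_self (by omega)] at this
  exact absurd (Nat.dvd_one.mp h3) hp.one_lt.ne'

end Main

/-- For `q = p^r`, every Sylow `p`-subgroup of `PSL_n(F_q)` is isomorphic to
the group of `n × n` unitriangular matrices over `F_{p^r}`. -/
theorem sylow_p_PSL (p r n : ℕ) (hp : p.Prime) (hr : 1 ≤ r) (hn : 2 ≤ n)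
    (F : Type*) [Field F] [Fintype F] (hF : Fintype.card F = p ^ r)
    (P : Sylow p (Matrix.SpecialLinearGroup (Fin n) F ⧸
      Subgroup.center (Matrix.SpecialLinearGroup (Fin n) F))) :
    Nonempty (↥(P : Subgroup (Matrix.SpecialLinearGroup (Fin n) F ⧸
      Subgroup.center (Matrix.SpecialLinearGroup (Fin n) F))) ≃* ↥(UpGroup n F)) := by
  classical
  haveI : Fact p.Prime := ⟨hp⟩
  set G := Matrix.SpecialLinearGroup (Fin n) F with hG
  set q := Fintype.card F with hq
  set S := ∑ j : Fin n, (j : ℕ) with hS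
  set K := ∏ i : Fin n, (q ^ (n - (i : ℕ)) - 1) with hKdef
  have hq0 : 0 < q := Fintype.card_pos
  have htoGLinj : Function.Injective (Matrix.SpecialLinearGroup.toGL (n := Fin n) (R := F)) :=
    fun a b h => Subtype.ext (congrArg Units.val h)
  have hrange : UpGroup n F ≤ (Matrix.SpecialLinearGroup.toGL (n := Fin n) (R := F)).range := by
    intro M hM
    rw [mem_UpGroup] at hM
    have hbt : (M.val).BlockTriangular id := fun i j hij => hM.1 i j hij
    have hdet : (M.val).det = 1 := by
      rw [Matrix.det_of_upperTriangular hbt]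
      exact Finset.prod_eq_one fun i _ => hM.2 i
    exact ⟨⟨M.val, hdet⟩, Units.ext rfl⟩
  set USL : Subgroup G := (UpGroup n F).comap Matrix.SpecialLinearGroup.toGL with hUSL
  have e1 : USL ≃* UpGroup n F :=
    (Subgroup.equivMapOfInjective _ _ htoGLinj).trans
      (MulEquiv.subgroupCongr (Subgroup.map_comap_eq_self hrange))
  set π := QuotientGroup.mk' (Subgroup.center G) with hπ
  set f := π.comp USL.subtype with hf
  have hfinj : Function.Injective f := by
    rw [injective_iff_map_eq_one]
    rintro ⟨x, hx⟩ hfx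
    have hker : x ∈ Subgroup.center G := by
      have hker' : x ∈ π.ker := hfx
      rwa [hπ, QuotientGroup.ker_mk'] at hker'
    obtain ⟨c, -, hc⟩ := Matrix.SpecialLinearGroup.mem_center_iff.mp hker
    have hx' := (mem_UpGroup _).mp (Subgroup.mem_comap.mp hx)
    have hi0 : (0 : ℕ) < n := by omega
    have hdiag : (Matrix.SpecialLinearGroup.toGL x).val ⟨0, hi0⟩ ⟨0, hi0⟩ = 1 := hx'.2 ⟨0, hi0⟩
    have hc1 : c = 1 := by
      have h2 := congrFun (congrFun (congrArg (fun (M : Matrix (Fin n) (Fin n) F) => M) hc)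
        ⟨0, hi0⟩) ⟨0, hi0⟩
      simpa [Matrix.scalar_apply] using h2.trans hdiag
    have : (x : Matrix (Fin n) (Fin n) F) = 1 := by
      rw [← hc, hc1, map_one]
    exact Subtype.ext (Subtype.ext this)
  set UPSL := USL.map π with hUPSL
  have e2 : USL ≃* UPSL :=
    (MonoidHom.ofInjective hfinj).trans
      (MulEquiv.subgroupCongr (by rw [hf, MonoidHom.range_comp, Subgroup.range_subtype]))
  have hcardU : Nat.card UPSL = q ^ S := by
    rw [← Nat.card_congr e2.toEquiv, Nat.card_congr e1.toEquiv,
      Nat.card_congr (upGroupEquiv (n := n) (F := F)), Nat.card_fun, card_upIdx,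
      Nat.card_eq_fintype_card]
  have hPG : IsPGroup p UPSL := IsPGroup.of_card (n := r * S)
    (by rw [hcardU, hF, ← pow_mul])
  have hmul : Nat.card UPSL * UPSL.index = Nat.card (G ⧸ Subgroup.center G) :=
    Subgroup.card_mul_index _
  have hPSLdvd : Nat.card (G ⧸ Subgroup.center G) ∣ Nat.card (GL (Fin n) F) := by
    have h1 : Nat.card (G ⧸ Subgroup.center G) ∣ Nat.card G := by
      rw [← Subgroup.index_eq_card]
      exact Subgroup.index_dvd_card _
    have h2 : Nat.card G ∣ Nat.card (GL (Fin n) F) := by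
      rw [Nat.card_congr
        (MonoidHom.ofInjective htoGLinj).toEquiv]
      exact Subgroup.card_subgroup_dvd_card _
    exact h1.trans h2
  have hF' : Fintype.card F = p ^ r := hq.symm.trans hF
  have hGL := card_GL_eq n F
  rw [← hq, ← hS, ← hKdef] at hGL
  have h3 : q ^ S * UPSL.index ∣ q ^ S * K := by
    calc q ^ S * UPSL.index = Nat.card UPSL * UPSL.index := by rw [hcardU]
      _ = Nat.card (G ⧸ Subgroup.center G) := hmul
      _ ∣ Nat.card (GL (Fin n) F) := hPSLdvd
      _ = q ^ S * K := hGL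
  have hidx : UPSL.index ∣ K := (Nat.mul_dvd_mul_iff_left (by positivity : 0 < q ^ S)).mp h3
  have hcop : Nat.Coprime p UPSL.index := by
    have hcK := coprime_K p r n hp hr F hF'
    rw [← hq, ← hKdef] at hcK
    exact hcK.coprime_dvd_right hidx
  obtain ⟨Q, hQle⟩ := hPG.exists_le_sylow
  obtain ⟨k, hk⟩ := Q.isPGroup'.exists_card_eq
  have hdvd : Nat.card Q.toSubgroup ∣ q ^ S := by
    have h1 : Nat.card Q.toSubgroup ∣ Nat.card (G ⧸ Subgroup.center G) :=
      Subgroup.card_subgroup_dvd_card _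
    rw [← hmul, hcardU] at h1
    rw [hk] at h1 ⊢
    exact (Nat.Coprime.pow_left k hcop).dvd_of_dvd_mul_right h1
  have hEq : UPSL = Q.toSubgroup :=
    Subgroup.eq_of_le_of_card_ge hQle (by
      rw [hcardU]
      exact Nat.le_of_dvd (by positivity) hdvd)
  have ePQ : ↥P.toSubgroup ≃* ↥Q.toSubgroup := Sylow.equiv P Q
  exact ⟨ePQ.trans ((MulEquiv.subgroupCongr hEq.symm).trans (e2.symm.trans e1))⟩
end

section
/- Let $p$ be any prime and $q = p^r$. Then every Sylow $p$-subgroup of $PSp(2n,q)$ is isomorphic to the semidirect product $\operatorname{Sym}(n,p^r) \rtimes \operatorname{Up}_n(\mathbb{F}_{p^r})$, where $A \in \operatorname{Up}_n(\mathbb{F}_{p^r})$ acts on $B \in \operatorname{Sym}(n,p^r)$ by $A(B) = ABA^T$. Moreover, the set of matrices $\begin{pmatrix} A & 0 \\ 0 & (A^{-1})^T\end{pmatrix}\begin{pmatrix} I_n & B \\ 0 & I_n\end{pmatrix}$ with $A \in \operatorname{Up}_n(\mathbb{F}_{p^r})$ and $B \in \operatorname{Sym}(n,p^r)$ is such a Sylow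 $p$-subgroup inside $Sp(2n,q)$ (mapped isomorphically into $PSp(2n,q)$). -/
open Matrix

variable {F : Type*} [Field F] {n : ℕ}

/-- Twisted conjugation `B ↦ A * B * (σ(A))ᵀ` of an invertible matrix `A` on square matrices. -/
def matConj (σ : F →+* F) (A : GL (Fin n) F) (B : Matrix (Fin n) (Fin n) F) :
    Matrix (Fin n) (Fin n) F :=
  A.val * B * (A.val.map σ)ᵀ

lemma matConj_one (σ : F →+* F) (B : Matrix (Fin n) (Fin n) F) : matConj σ 1 B = B := by
  simp [matConj, Matrix.map_one σ σ.map_zero σ.map_one]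

lemma matConj_mul (σ : F →+* F) (A A' : GL (Fin n) F) (B : Matrix (Fin n) (Fin n) F) :
    matConj σ (A * A') B = matConj σ A (matConj σ A' B) := by
  simp only [matConj, Units.val_mul, Matrix.map_mul, Matrix.transpose_mul, Matrix.mul_assoc]

lemma matConj_add (σ : F →+* F) (A : GL (Fin n) F) (B C : Matrix (Fin n) (Fin n) F) :
    matConj σ A (B + C) = matConj σ A B + matConj σ A C := by
  simp [matConj, Matrix.mul_add, Matrix.add_mul]

lemma matConj_inv_cancel (σ : F →+* F) (A : GL (Fin n) F) (B : Matrix (Fin n) (Fin n) F) :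
    matConj σ A⁻¹ (matConj σ A B) = B := by
  rw [← matConj_mul, inv_mul_cancel, matConj_one]

lemma matConj_cancel_inv (σ : F →+* F) (A : GL (Fin n) F) (B : Matrix (Fin n) (Fin n) F) :
    matConj σ A (matConj σ A⁻¹ B) = B := by
  rw [← matConj_mul, mul_inv_cancel, matConj_one]

/-- The action of a subgroup `U ≤ GL n F` on an `U`-stable additive subgroup `N` of matrices
by twisted conjugation `B ↦ A * B * (σ(A))ᵀ`, as a homomorphism into the automorphisms of
(the multiplicative version of) `N`. -/
def matConjMulAut (U : Subgroup (GL (Fin n) F)) (N : AddSubgroup (Matrix (Fin n) (Fin n) F))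
    (σ : F →+* F) (h : ∀ A : GL (Fin n) F, A ∈ U → ∀ B ∈ N, matConj σ A B ∈ N) :
    ↥U →* MulAut (Multiplicative ↥N) where
  toFun A :=
    { toFun := fun B => Multiplicative.ofAdd
        ⟨matConj σ A.val (Multiplicative.toAdd B).val, h A.val A.2 _ (Multiplicative.toAdd B).2⟩
      invFun := fun B => Multiplicative.ofAdd
        ⟨matConj σ (A.val)⁻¹ (Multiplicative.toAdd B).val,
          h (A.val)⁻¹ (U.inv_mem A.2) _ (Multiplicative.toAdd B).2⟩
      left_inv := fun B => by
        apply Multiplicative.toAdd.injective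
        exact Subtype.ext (matConj_inv_cancel σ A.val _)
      right_inv := fun B => by
        apply Multiplicative.toAdd.injective
        exact Subtype.ext (matConj_cancel_inv σ A.val _)
      map_mul' := fun B C => by
        apply Multiplicative.toAdd.injective
        exact Subtype.ext (matConj_add σ A.val _ _) }
  map_one' := by
    refine MulEquiv.ext fun B => ?_
    exact congrArg Multiplicative.ofAdd (Subtype.ext (matConj_one σ _))
  map_mul' A A' := by
    refine MulEquiv.ext fun B => ?_
    exact congrArg Multiplicative.ofAdd (Subtype.ext (matConj_mul σ A.val A'.val _))


open Matrix

/-- The additive group of symmetric `n × n` matrices over `F`. -/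
def symAddSubgroup (n : ℕ) (F : Type*) [Field F] :
    AddSubgroup (Matrix (Fin n) (Fin n) F) where
  carrier := {B | Bᵀ = B}
  add_mem' := by intro a b ha hb; simp only [Set.mem_setOf_eq] at *; rw [transpose_add, ha, hb]
  zero_mem' := transpose_zero
  neg_mem' := by intro a ha; simp only [Set.mem_setOf_eq] at *; rw [transpose_neg, ha]

lemma map_ringHom_id {n : ℕ} {F : Type*} [Field F] (M : Matrix (Fin n) (Fin n) F) :
    M.map ⇑(RingHom.id F) = M := by ext i j; simp

lemma symAddSubgroup_stable (n : ℕ) (F : Type*) [Field F] [Fintype F] :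
    ∀ A : GL (Fin n) F, A ∈ UpGroup n F →
      ∀ B ∈ symAddSubgroup n F, matConj (RingHom.id F) A B ∈ symAddSubgroup n F := by
  intro A _ B hB
  have hB' : Bᵀ = B := hB
  show (matConj (RingHom.id F) A B)ᵀ = matConj (RingHom.id F) A B
  simp [matConj, Matrix.transpose_mul, Matrix.mul_assoc, hB', map_ringHom_id]

/-- The semidirect product `Sym(n, F) ⋊ Up_n(F)` with `A` acting on `B` by `A * B * Aᵀ`. -/
noncomputable def symSemidirect (n : ℕ) (F : Type*) [Field F] [Fintype F] :=
  SemidirectProduct (Multiplicative ↥(symAddSubgroup n F)) ↥(UpGroup n F)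
    (matConjMulAut (UpGroup n F) (symAddSubgroup n F) (RingHom.id F)
      (symAddSubgroup_stable n F))

noncomputable instance (n : ℕ) (F : Type*) [Field F] [Fintype F] :
    Group (symSemidirect n F) :=
  SemidirectProduct.instGroup

/-- `PSp(2n, q)`: the quotient of the symplectic group by its center. -/
def PSpGroup (n : ℕ) (F : Type*) [Field F] :=
  ↥(Matrix.symplecticGroup (Fin n) F) ⧸ Subgroup.center ↥(Matrix.symplecticGroup (Fin n) F)

instance (n : ℕ) (F : Type*) [Field F] : Group (PSpGroup n F) :=
  inferInstanceAs (Group (_ ⧸ _))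
namespace SylowPSpProof

open Matrix

variable (n : ℕ) (F : Type*) [Field F] [Fintype F]

abbrev SpGrp := ↥(Matrix.symplecticGroup (Fin n) F)

lemma fromBlocks_inj {l m α : Type*} {A A' : Matrix l l α} {B B' : Matrix l m α}
    {C C' : Matrix m l α} {D D' : Matrix m m α}
    (h : fromBlocks A B C D = fromBlocks A' B' C' D') :
    A = A' ∧ B = B' ∧ C = C' ∧ D = D' := by
  refine ⟨?_, ?_, ?_, ?_⟩ <;> ext i j
  · exact congrFun (congrFun h (Sum.inl i)) (Sum.inl j)
  · exact congrFun (congrFun h (Sum.inl i)) (Sum.inr j)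
  · exact congrFun (congrFun h (Sum.inr i)) (Sum.inl j)
  · exact congrFun (congrFun h (Sum.inr i)) (Sum.inr j)

lemma GL_mul_inv (A : GL (Fin n) F) : A.val * (A⁻¹).val = 1 := by
  rw [← Units.val_mul, mul_inv_cancel, Units.val_one]

lemma GL_inv_mul (A : GL (Fin n) F) : (A⁻¹).val * A.val = 1 := by
  rw [← Units.val_mul, inv_mul_cancel, Units.val_one]

lemma uMem (B : Matrix (Fin n) (Fin n) F) (hB : Bᵀ = B) :
    fromBlocks 1 B 0 1 ∈ Matrix.symplecticGroup (Fin n) F := by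
  rw [SymplecticGroup.mem_iff, Matrix.J, fromBlocks_transpose, fromBlocks_multiply,
    fromBlocks_multiply]
  simp [hB]

lemma dMem (A : GL (Fin n) F) :
    fromBlocks A.val 0 0 ((A⁻¹).val)ᵀ ∈ Matrix.symplecticGroup (Fin n) F := by
  have h1 : A.val * (A⁻¹).val = 1 := GL_mul_inv n F A
  have h2 : ((A⁻¹).val)ᵀ * (A.val)ᵀ = 1 := by rw [← transpose_mul, h1, transpose_one]
  rw [SymplecticGroup.mem_iff, Matrix.J, fromBlocks_transpose, fromBlocks_multiply,
    fromBlocks_multiply]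
  simp only [Matrix.mul_zero, Matrix.zero_mul, Matrix.mul_one, Matrix.one_mul, Matrix.mul_neg,
    Matrix.neg_mul, add_zero, zero_add, transpose_zero, transpose_one, transpose_transpose,
    neg_zero, h1, h2]

def uElt (B : Matrix (Fin n) (Fin n) F) (hB : Bᵀ = B) : SpGrp n F :=
  ⟨fromBlocks 1 B 0 1, uMem n F B hB⟩

def dElt (A : ↥(UpGroup n F)) : SpGrp n F :=
  ⟨fromBlocks A.val.val 0 0 ((A.val⁻¹).val)ᵀ, dMem n F A.val⟩

def homU : Multiplicative ↥(symAddSubgroup n F) →* SpGrp n F where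
  toFun B := uElt n F (Multiplicative.toAdd B).val (Multiplicative.toAdd B).prop
  map_one' := by
    apply Subtype.ext
    show fromBlocks 1 (0 : Matrix (Fin n) (Fin n) F) 0 1 = 1
    rw [fromBlocks_one]
  map_mul' B C := by
    apply Subtype.ext
    show fromBlocks 1 ((Multiplicative.toAdd B).val + (Multiplicative.toAdd C).val) 0 1
      = fromBlocks 1 _ 0 1 * fromBlocks 1 _ 0 1
    rw [fromBlocks_multiply]
    simp [add_comm]

def homD : ↥(UpGroup n F) →* SpGrp n F where
  toFun := dElt n F
  map_one' := by
    apply Subtype.ext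
    show fromBlocks ((1 : ↥(UpGroup n F)).val.val) 0 0 (((1 : ↥(UpGroup n F)).val⁻¹).val)ᵀ = 1
    rw [show ((1 : ↥(UpGroup n F)).val : GL (Fin n) F) = 1 from rfl]
    rw [inv_one]
    rw [show ((1 : GL (Fin n) F).val : Matrix (Fin n) (Fin n) F) = 1 from rfl]
    rw [transpose_one, fromBlocks_one]
  map_mul' A A' := by
    apply Subtype.ext
    show fromBlocks ((A * A').val.val) 0 0 (((A * A').val⁻¹).val)ᵀ
      = fromBlocks A.val.val 0 0 ((A.val⁻¹).val)ᵀ * fromBlocks A'.val.val 0 0 ((A'.val⁻¹).val)ᵀ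
    have h1 : ((A * A').val : GL (Fin n) F) = A.val * A'.val := rfl
    rw [fromBlocks_multiply, h1, _root_.mul_inv_rev, Units.val_mul, Units.val_mul, transpose_mul]
    simp

lemma matConj_id_eq (A : GL (Fin n) F) (B : Matrix (Fin n) (Fin n) F) :
    matConj (RingHom.id F) A B = A.val * B * (A.val)ᵀ := by
  rw [matConj, map_ringHom_id]

def psi : symSemidirect n F →* SpGrp n F :=
  SemidirectProduct.lift (homU n F) (homD n F) (by
    intro A
    refine MonoidHom.ext fun B => ?_
    simp only [MonoidHom.comp_apply, MulEquiv.coe_toMonoidHom, MulAut.conj_apply]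
    rw [← map_inv (homD n F) A]
    apply Subtype.ext
    show fromBlocks 1 (matConj (RingHom.id F) A.val (Multiplicative.toAdd B).val) 0 1
      = (fromBlocks (A.val.val) 0 0 ((A.val⁻¹).val)ᵀ
          * fromBlocks 1 (Multiplicative.toAdd B).val 0 1)
        * fromBlocks ((A⁻¹).val.val) 0 0 (((A⁻¹).val⁻¹).val)ᵀ
    have h1 : ((A⁻¹).val : GL (Fin n) F) = (A.val)⁻¹ := rfl
    rw [h1, inv_inv, matConj_id_eq]
    rw [fromBlocks_multiply, fromBlocks_multiply]
    have h2 : A.val.val * ((A.val)⁻¹).val = 1 := GL_mul_inv n F A.val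
    have h3 : ((A.val⁻¹).val)ᵀ * (A.val.val)ᵀ = 1 := by rw [← transpose_mul, h2, transpose_one]
    simp only [Matrix.mul_zero, Matrix.zero_mul, Matrix.mul_one, Matrix.one_mul,
      add_zero, zero_add, h2, h3])

lemma psi_apply (g : symSemidirect n F) :
    psi n F g = homU n F g.left * homD n F g.right := rfl

lemma uElt_mem_range (B : Matrix (Fin n) (Fin n) F) (hB : Bᵀ = B) :
    uElt n F B hB ∈ (psi n F).range :=
  ⟨SemidirectProduct.inl (Multiplicative.ofAdd ⟨B, hB⟩), SemidirectProduct.lift_inl _ _ _ _⟩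

lemma dElt_mem_range (A : ↥(UpGroup n F)) : dElt n F A ∈ (psi n F).range :=
  ⟨SemidirectProduct.inr A, SemidirectProduct.lift_inr _ _ _ _⟩

end SylowPSpProof
namespace SylowPSpProof

open Matrix

variable (n : ℕ) (F : Type*) [Field F] [Fintype F]

lemma up_lower (A : ↥(UpGroup n F)) : ∀ i j : Fin n, j < i → A.val.val i j = 0 := A.2.1

lemma up_diag (A : ↥(UpGroup n F)) : ∀ i, A.val.val i i = 1 := A.2.2

def ordIdx : Fin n ⊕ Fin n → ℕ := Sum.elim (fun i => (i : ℕ)) (fun i => 2 * n - 1 - (i : ℕ))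

lemma ordIdx_inl (i : Fin n) : ordIdx n (Sum.inl i) = (i : ℕ) := rfl

lemma ordIdx_inr (i : Fin n) : ordIdx n (Sum.inr i) = 2 * n - 1 - (i : ℕ) := rfl

lemma ordIdx_inr_ge (i : Fin n) : n ≤ ordIdx n (Sum.inr i) := by
  have := i.2; rw [ordIdx_inr]; omega

lemma ordIdx_lt (a : Fin n ⊕ Fin n) : ordIdx n a < 2 * n := by
  rcases a with a | a
  · have := a.2; rw [ordIdx_inl]; omega
  · have := a.2; rw [ordIdx_inr]; omega

lemma ordIdx_injective : Function.Injective (ordIdx n) := by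
  rintro (a | a) (b | b) h
  · exact congrArg Sum.inl (Fin.ext h)
  · exfalso; have ha := a.2; have hb := b.2; rw [ordIdx_inl] at h; rw [ordIdx_inr] at h; omega
  · exfalso; have ha := a.2; have hb := b.2; rw [ordIdx_inr] at h; rw [ordIdx_inl] at h; omega
  · refine congrArg Sum.inr (Fin.ext ?_)
    have ha := a.2; have hb := b.2; rw [ordIdx_inr, ordIdx_inr] at h; omega

lemma ordIdx_surj (j : ℕ) (hj : j < 2 * n) : ∃ b, ordIdx n b = j := by
  rcases Nat.lt_or_ge j n with h | h
  · exact ⟨Sum.inl ⟨j, h⟩, rfl⟩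
  · exact ⟨Sum.inr ⟨2 * n - 1 - j, by omega⟩, by rw [ordIdx_inr]; simp; omega⟩

lemma mem_psi_range_iff (M : SpGrp n F) :
    M ∈ (psi n F).range ↔ ∃ A : ↥(UpGroup n F), ∃ B : Matrix (Fin n) (Fin n) F, Bᵀ = B ∧
      M.val = fromBlocks (A.val.val) (A.val.val * B) 0 ((A.val⁻¹).val)ᵀ := by
  constructor
  · rintro ⟨g, rfl⟩
    refine ⟨g.right, ((g.right.val⁻¹).val) * (Multiplicative.toAdd g.left).val
      * (((g.right.val⁻¹)).val)ᵀ, ?_, ?_⟩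
    · have hB := (Multiplicative.toAdd g.left).prop
      have hB' : ((Multiplicative.toAdd g.left).val)ᵀ = (Multiplicative.toAdd g.left).val := hB
      rw [transpose_mul, transpose_mul, transpose_transpose, hB', Matrix.mul_assoc]
    · rw [psi_apply]
      show (fromBlocks 1 (Multiplicative.toAdd g.left).val 0 1)
          * fromBlocks (g.right.val.val) 0 0 ((g.right.val⁻¹).val)ᵀ = _
      rw [fromBlocks_multiply]
      rw [← Matrix.mul_assoc, ← Matrix.mul_assoc, GL_mul_inv n F g.right.val]
      simp
  · rintro ⟨A, B, hB, hM⟩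
    refine ⟨⟨Multiplicative.ofAdd ⟨A.val.val * B * (A.val.val)ᵀ, ?_⟩, A⟩, ?_⟩
    · show (A.val.val * B * (A.val.val)ᵀ)ᵀ = A.val.val * B * (A.val.val)ᵀ
      rw [transpose_mul, transpose_mul, transpose_transpose, hB, Matrix.mul_assoc]
    · apply Subtype.ext
      show (fromBlocks 1 (A.val.val * B * (A.val.val)ᵀ) 0 1)
          * fromBlocks (A.val.val) 0 0 ((A.val⁻¹).val)ᵀ = M.val
      rw [hM, fromBlocks_multiply]
      have h3 : (A.val.val)ᵀ * ((A.val⁻¹).val)ᵀ = 1 := by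
        rw [← transpose_mul, GL_inv_mul n F A.val, transpose_one]
      simp only [Matrix.mul_zero, Matrix.zero_mul, Matrix.one_mul, Matrix.mul_one, add_zero,
        zero_add]
      rw [Matrix.mul_assoc (A.val.val * B), h3, Matrix.mul_one]

lemma mem_psi_range_iff' (M : SpGrp n F) :
    M ∈ (psi n F).range ↔ ∃ A : ↥(UpGroup n F), ∃ B : Matrix (Fin n) (Fin n) F, Bᵀ = B ∧
      M.val = fromBlocks A.val.val 0 0 ((A.val⁻¹).val)ᵀ * fromBlocks 1 B 0 1 := by
  rw [mem_psi_range_iff]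
  have key : ∀ (A : ↥(UpGroup n F)) (B : Matrix (Fin n) (Fin n) F),
      fromBlocks A.val.val 0 0 ((A.val⁻¹).val)ᵀ * fromBlocks 1 B 0 1
        = fromBlocks A.val.val (A.val.val * B) 0 ((A.val⁻¹).val)ᵀ := by
    intro A B; rw [fromBlocks_multiply]; simp
  constructor
  · rintro ⟨A, B, hB, hM⟩; exact ⟨A, B, hB, by rw [key]; exact hM⟩
  · rintro ⟨A, B, hB, hM⟩; exact ⟨A, B, hB, by rw [← key]; exact hM⟩

lemma range_tri {x : SpGrp n F} (hx : x ∈ (psi n F).range) :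
    ∀ a b, ordIdx n b ≤ ordIdx n a →
      x.val a b = (1 : Matrix (Fin n ⊕ Fin n) (Fin n ⊕ Fin n) F) a b := by
  obtain ⟨A, B, hB, hM⟩ := (mem_psi_range_iff n F x).mp hx
  have hAi : (A : GL (Fin n) F)⁻¹ ∈ UpGroup n F := (UpGroup n F).inv_mem A.2
  rintro (i | i) (j | j) h <;> rw [hM]
  · show A.val.val i j = _
    rcases eq_or_lt_of_le (h : (j : ℕ) ≤ (i : ℕ)) with h' | h'
    · have : i = j := Fin.ext h'.symm
      subst this
      rw [up_diag n F A, Matrix.one_apply_eq]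
    · rw [up_lower n F A i j h', Matrix.one_apply_ne (by
        intro hh; rw [Sum.inl.injEq] at hh; subst hh; exact absurd h' (lt_irrefl _))]
  · exfalso
    rw [ordIdx_inl] at h
    have h2 := ordIdx_inr_ge n j
    have := i.2
    omega
  · show (0 : Matrix (Fin n) (Fin n) F) i j = _
    rw [Matrix.one_apply_ne (by simp)]
    rfl
  · show ((A.val⁻¹).val)ᵀ i j = _
    rw [ordIdx_inr, ordIdx_inr] at h
    have hi := i.2; have hj := j.2
    have hij : (j : ℕ) ≥ (i : ℕ) := by omega
    rcases eq_or_lt_of_le hij with h' | h'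
    · have : i = j := Fin.ext h'
      subst this
      rw [transpose_apply]
      rw [show (A.val⁻¹).val i i = 1 from (⟨A.val⁻¹, hAi⟩ : ↥(UpGroup n F)).2.2 i]
      rw [Matrix.one_apply_eq]
    · rw [transpose_apply]
      rw [show (A.val⁻¹).val j i = 0 from (⟨A.val⁻¹, hAi⟩ : ↥(UpGroup n F)).2.1 j i h']
      rw [Matrix.one_apply_ne (by
        intro hh; rw [Sum.inr.injEq] at hh; subst hh; exact absurd h' (lt_irrefl _))]

lemma pow_eq_one_of_tri (p : ℕ) (hp : p.Prime) [CharP F p] {ι : Type*} [Fintype ι]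
    [DecidableEq ι] (f : ι → ℕ) (N : ℕ) (hfN : ∀ a, f a < N) (M : Matrix ι ι F)
    (h : ∀ a b, f b ≤ f a → M a b = (1 : Matrix ι ι F) a b) :
    M ^ p ^ N = 1 := by
  rcases isEmpty_or_nonempty ι with hι | hι
  · apply Matrix.ext; intro i j; exact (hι.false i).elim
  · haveI := Fact.mk hp
    set D := M - 1 with hD
    have hD0 : ∀ a b, f b ≤ f a → D a b = 0 := fun a b hab => by
      rw [hD, Matrix.sub_apply, h a b hab, sub_self]
    have hnil : ∀ k, ∀ a b, f b < f a + k → (D ^ k) a b = 0 := by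
      intro k
      induction k with
      | zero =>
        intro a b hab
        rw [pow_zero]
        exact Matrix.one_apply_ne (by rintro rfl; omega)
      | succ k ih =>
        intro a b hab
        rw [pow_succ']
        rw [Matrix.mul_apply]
        apply Finset.sum_eq_zero
        intro c _
        rcases le_or_gt (f c) (f a) with hc | hc
        · rw [hD0 a c hc, zero_mul]
        · rw [ih c b (by omega), mul_zero]
    have hDN : D ^ N = 0 := by
      ext a b
      rw [hnil N a b (by have := hfN b; omega)]
      rfl
    have hM1 : M = 1 + D := by rw [hD]; abel
    have hDp : D ^ p ^ N = 0 := by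
      have hNle : N ≤ p ^ N := le_of_lt (Nat.lt_pow_self hp.one_lt)
      rw [show p ^ N = N + (p ^ N - N) by omega, pow_add, hDN, Matrix.zero_mul]
    rw [hM1, add_pow_char_pow_of_commute _ _ (Commute.one_left D), hDp, one_pow, add_zero]

lemma isPGroup_range (p : ℕ) (hp : p.Prime) [CharP F p] : IsPGroup p ↥(psi n F).range := by
  intro x
  refine ⟨2 * n, ?_⟩
  have hM := pow_eq_one_of_tri F p hp (ordIdx n) (2 * n) (ordIdx_lt n) x.val.val
    (range_tri n F x.2)
  apply Subtype.ext
  apply Subtype.ext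
  show ((((x : ↥(psi n F).range) ^ p ^ (2 * n) : ↥(psi n F).range) : SpGrp n F)
    : Matrix (Fin n ⊕ Fin n) (Fin n ⊕ Fin n) F) = 1
  rw [SubgroupClass.coe_pow, SubmonoidClass.coe_pow]
  exact hM

end SylowPSpProof
namespace SylowPSpProof

open Matrix

variable (n : ℕ) (F : Type*) [Field F] [Fintype F]

lemma mem_range_of_tri (x : SpGrp n F)
    (h : ∀ a b, ordIdx n b ≤ ordIdx n a →
      x.val a b = (1 : Matrix (Fin n ⊕ Fin n) (Fin n ⊕ Fin n) F) a b) :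
    x ∈ (psi n F).range := by
  have h21 : (x.val).toBlocks₂₁ = 0 := by
    ext i j
    have := h (Sum.inr i) (Sum.inl j)
      (by rw [ordIdx_inl]; have := ordIdx_inr_ge n i; have := j.2; omega)
    rw [Matrix.one_apply_ne (by simp)] at this
    exact this
  have hm : x.val = fromBlocks (x.val).toBlocks₁₁ (x.val).toBlocks₁₂ 0 (x.val).toBlocks₂₂ := by
    rw [← h21, fromBlocks_toBlocks]
  set Am := (x.val).toBlocks₁₁ with hAm
  set Cm := (x.val).toBlocks₁₂ with hCm
  set Dm := (x.val).toBlocks₂₂ with hDm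
  have hsp := x.2
  rw [SymplecticGroup.mem_iff, hm, Matrix.J, fromBlocks_transpose, fromBlocks_multiply,
    fromBlocks_multiply] at hsp
  simp only [Matrix.mul_zero, Matrix.zero_mul, Matrix.mul_one, Matrix.one_mul, Matrix.mul_neg,
    Matrix.neg_mul, add_zero, zero_add, neg_zero, transpose_zero, transpose_one] at hsp
  obtain ⟨e11, e12, e21, -⟩ := fromBlocks_inj hsp
  -- e11 : Cm * Amᵀ + -(Am * Cmᵀ) = 0, e12 : -(Am * Dmᵀ) = -1, e21 : Dm * Amᵀ = 1
  have hADT : Am * Dmᵀ = 1 := by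
    have := congrArg Neg.neg e12
    rwa [neg_neg, neg_neg] at this
  have hATD : Amᵀ * Dm = 1 := mul_eq_one_comm.mp e21
  have hDTA : Dmᵀ * Am = 1 := by
    have := congrArg transpose hATD
    rwa [transpose_mul, transpose_transpose, transpose_one] at this
  have hCA : Cm * Amᵀ = Am * Cmᵀ := by
    have := congrArg (fun M => M + Am * Cmᵀ) e11
    simpa [add_assoc] using this
  set Au : GL (Fin n) F := ⟨Am, Dmᵀ, hADT, hDTA⟩ with hAu
  have hAuMem : Au ∈ UpGroup n F := by
    constructor
    · intro i j hij
      have := h (Sum.inl i) (Sum.inl j) (by rw [ordIdx_inl, ordIdx_inl]; omega)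
      rw [Matrix.one_apply_ne (by
        intro hh; rw [Sum.inl.injEq] at hh; subst hh; exact absurd hij (lt_irrefl _))] at this
      exact this
    · intro i
      have := h (Sum.inl i) (Sum.inl i) le_rfl
      rw [Matrix.one_apply_eq] at this
      exact this
  rw [mem_psi_range_iff]
  refine ⟨⟨Au, hAuMem⟩, Dmᵀ * Cm, ?_, ?_⟩
  · rw [transpose_mul, transpose_transpose]
    -- goal : Cmᵀ * Dm = Dmᵀ * Cm
    have h1 : Dmᵀ * (Cm * Amᵀ) * Dm = Dmᵀ * (Am * Cmᵀ) * Dm := by rw [hCA]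
    calc Cmᵀ * Dm = 1 * (Cmᵀ * Dm) := (Matrix.one_mul _).symm
      _ = Dmᵀ * (Am * Cmᵀ) * Dm := by
          rw [← hDTA]; rw [Matrix.mul_assoc, Matrix.mul_assoc, Matrix.mul_assoc]
      _ = Dmᵀ * (Cm * Amᵀ) * Dm := h1.symm
      _ = Dmᵀ * Cm * (Amᵀ * Dm) := by rw [Matrix.mul_assoc, Matrix.mul_assoc, Matrix.mul_assoc]
      _ = Dmᵀ * Cm := by rw [hATD, Matrix.mul_one]
  · show x.val = fromBlocks Am (Am * (Dmᵀ * Cm)) 0 ((Au⁻¹).val)ᵀ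
    have hinv : (Au⁻¹).val = Dmᵀ := rfl
    rw [hinv, transpose_transpose, ← Matrix.mul_assoc, hADT, Matrix.one_mul]
    exact hm

lemma psi_injective : Function.Injective (psi n F) := by
  rw [injective_iff_map_eq_one]
  intro g hg
  have hval : ((psi n F g : SpGrp n F) : Matrix (Fin n ⊕ Fin n) (Fin n ⊕ Fin n) F) = 1 := by
    rw [hg]; rfl
  rw [psi_apply] at hval
  have hval' : fromBlocks (g.right.val.val)
      ((Multiplicative.toAdd g.left).val * ((g.right.val⁻¹).val)ᵀ) 0 ((g.right.val⁻¹).val)ᵀ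
      = fromBlocks 1 0 0 1 := by
    rw [fromBlocks_one] at *
    rw [← hval]
    show _ = (fromBlocks 1 (Multiplicative.toAdd g.left).val 0 1)
        * fromBlocks (g.right.val.val) 0 0 ((g.right.val⁻¹).val)ᵀ
    rw [fromBlocks_multiply]
    simp
  obtain ⟨eA, eB, -, eD⟩ := fromBlocks_inj hval'
  have hgl : (Multiplicative.toAdd g.left).val = 0 := by
    rw [eD] at eB
    simpa using eB
  have hr : g.right = 1 := by
    apply Subtype.ext; apply Units.ext; exact eA
  have hl : g.left = 1 := by
    apply Multiplicative.toAdd.injective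
    apply Subtype.ext
    exact hgl
  cases g with
  | mk l r => rw [SemidirectProduct.mk_eq_inl_mul_inr, (by exact hl : l = 1),
      (by exact hr : r = 1), _root_.map_one, _root_.map_one, one_mul]; rfl

lemma range_center (x : SpGrp n F) (hx : x ∈ (psi n F).range)
    (hc : x ∈ Subgroup.center (SpGrp n F)) : x = 1 := by
  obtain ⟨A, B, hB, hM⟩ := (mem_psi_range_iff n F x).mp hx
  have hc' := Subgroup.mem_center_iff.mp hc
  -- commute with uElt 1
  have h1 : (uElt n F 1 transpose_one) * x = x * (uElt n F 1 transpose_one) := hc' _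
  have h1' := congrArg Subtype.val h1
  have h1'' : fromBlocks (A.val.val) (A.val.val * B + ((A.val⁻¹).val)ᵀ) 0 ((A.val⁻¹).val)ᵀ
      = fromBlocks (A.val.val) (A.val.val + A.val.val * B) 0 ((A.val⁻¹).val)ᵀ := by
    rw [show ((uElt n F 1 transpose_one) * x : SpGrp n F).val
        = fromBlocks 1 1 0 1 * x.val from rfl] at h1'
    rw [show (x * (uElt n F 1 transpose_one) : SpGrp n F).val
        = x.val * fromBlocks 1 1 0 1 from rfl] at h1'
    rw [hM, fromBlocks_multiply, fromBlocks_multiply] at h1'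
    simpa using h1'
  obtain ⟨-, e12, -, -⟩ := fromBlocks_inj h1''
  have hAD : ((A.val⁻¹).val)ᵀ = A.val.val := by
    have := congrArg (fun M => M - A.val.val * B) e12
    simpa [add_sub_cancel_left, add_sub_cancel_right] using this
  have hA1 : A.val.val = 1 := by
    have hAi : (A : GL (Fin n) F)⁻¹ ∈ UpGroup n F := (UpGroup n F).inv_mem A.2
    ext i j
    rcases lt_trichotomy i j with hij | hij | hij
    · rw [← hAD, transpose_apply,
        show (A.val⁻¹).val j i = 0 from (⟨A.val⁻¹, hAi⟩ : ↥(UpGroup n F)).2.1 j i hij,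
        Matrix.one_apply_ne (by intro hh; subst hh; exact absurd hij (lt_irrefl _))]
    · subst hij; rw [up_diag n F A, Matrix.one_apply_eq]
    · rw [up_lower n F A i j hij,
        Matrix.one_apply_ne (by intro hh; subst hh; exact absurd hij (lt_irrefl _))]
  have hMx : x.val = fromBlocks 1 B 0 1 := by
    rw [hM, hAD, hA1, Matrix.one_mul]
  -- commute with J
  have h2 : (SymplecticGroup.symJ (Fin n) F) * x = x * (SymplecticGroup.symJ (Fin n) F) := hc' _
  have h2' := congrArg Subtype.val h2
  have h2'' : (Matrix.J (Fin n) F) * x.val = x.val * (Matrix.J (Fin n) F) := h2'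
  rw [hMx, Matrix.J, fromBlocks_multiply, fromBlocks_multiply] at h2''
  simp only [Matrix.mul_zero, Matrix.zero_mul, Matrix.mul_one, Matrix.one_mul, Matrix.mul_neg,
    Matrix.neg_mul, add_zero, zero_add, neg_zero] at h2''
  obtain ⟨f11, -, -, -⟩ := fromBlocks_inj h2''
  -- f11 : 0 = B  (or B = 0)
  have hB0 : B = 0 := by
    first
    | exact f11.symm
    | exact f11
    | (rw [eq_comm] at f11; simpa using f11)
    | simpa using f11
  apply Subtype.ext
  rw [hMx, hB0, fromBlocks_one]
  rfl

lemma charP_of_card (p r : ℕ) (hp : p.Prime) (hr : 1 ≤ r) (hF : Fintype.card F = p ^ r) :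
    CharP F p := by
  haveI : CharP F (ringChar F) := ringChar.charP F
  obtain ⟨m, hq, hcard⟩ := FiniteField.card F (ringChar F)
  have hpq : p = ringChar F := by
    have hdvd : p ∣ ringChar F ^ (m : ℕ) := by
      rw [← hcard, hF]
      exact dvd_pow_self p (by omega)
    exact (Nat.prime_dvd_prime_iff_eq hp hq).mp (hp.dvd_of_dvd_pow hdvd)
  rw [hpq]
  infer_instance

end SylowPSpProof
namespace SylowPSpProof

open Matrix

variable (n : ℕ) (F : Type*) [Field F] [Fintype F]

def elemUp (s t : Fin n) (hst : s < t) : ↥(UpGroup n F) :=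
  ⟨⟨1 + Matrix.single s t (1 : F), 1 - Matrix.single s t (1 : F),
    by
      have hEE : Matrix.single s t (1 : F) * Matrix.single s t (1 : F) = 0 :=
        Matrix.single_mul_single_of_ne (1 : F) s t s (ne_of_gt hst) (1 : F)
      rw [mul_sub, mul_one, add_mul, one_mul, hEE, add_zero]
      abel,
    by
      have hEE : Matrix.single s t (1 : F) * Matrix.single s t (1 : F) = 0 :=
        Matrix.single_mul_single_of_ne (1 : F) s t s (ne_of_gt hst) (1 : F)
      rw [mul_add, mul_one, sub_mul, one_mul, hEE, sub_zero]
      abel⟩,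
    by
      constructor
      · intro i j hij
        show (1 + Matrix.single s t (1 : F)) i j = 0
        rw [Matrix.add_apply,
          Matrix.one_apply_ne (by intro hh; subst hh; exact absurd hij (lt_irrefl _)),
          Matrix.single_apply_of_ne _ _ _ _ _
            (by rintro ⟨rfl, rfl⟩; exact absurd (hst.trans hij) (lt_irrefl _)),
          add_zero]
      · intro i
        show (1 + Matrix.single s t (1 : F)) i i = 1
        rw [Matrix.add_apply, Matrix.one_apply_eq,
          Matrix.single_apply_of_ne _ _ _ _ _
            (by rintro ⟨rfl, rfl⟩; exact absurd hst (lt_irrefl _)),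
          add_zero]⟩

lemma key_tri (p : ℕ) (hp : p.Prime) (r : ℕ) (hr : 1 ≤ r) (hF : Fintype.card F = p ^ r)
    (Q : Subgroup (SpGrp n F)) (hQ : IsPGroup p ↥Q) (hle : (psi n F).range ≤ Q) :
    ∀ x ∈ Q, ∀ a b, ordIdx n b ≤ ordIdx n a →
      x.val a b = (1 : Matrix (Fin n ⊕ Fin n) (Fin n ⊕ Fin n) F) a b := by
  haveI := Fact.mk hp
  have main : ∀ j : ℕ, ∀ x ∈ Q, ∀ b, ordIdx n b < j →
      (∀ a, ordIdx n b < ordIdx n a → x.val a b = 0) ∧ x.val b b = 1 := by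
    intro j
    induction j with
    | zero => exact fun x hx b hb => absurd hb (Nat.not_lt_zero _)
    | succ j ih =>
      rcases Nat.lt_or_ge j (2 * n) with hjlt | hjge
      swap
      · exact fun x hx b hb => ih x hx b (by have := ordIdx_lt n b; omega)
      obtain ⟨b₀, hb₀⟩ := ordIdx_surj n j hjlt
      set X := ({a : Fin n ⊕ Fin n // j ≤ ordIdx n a} → F) with hX
      letI : SMul ↥Q X := ⟨fun x v a => ∑ c : {a : Fin n ⊕ Fin n // j ≤ ordIdx n a},
        (x : SpGrp n F).val a.val c.val * v c⟩
      have smul_def : ∀ (x : ↥Q) (v : X) (a : {a : Fin n ⊕ Fin n // j ≤ ordIdx n a}),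
          (x • v) a = ∑ c : {a : Fin n ⊕ Fin n // j ≤ ordIdx n a},
            (x : SpGrp n F).val a.val c.val * v c := fun _ _ _ => rfl
      have hsum : ∀ (x : SpGrp n F), x ∈ Q → ∀ (a : {a : Fin n ⊕ Fin n // j ≤ ordIdx n a})
          (g : Fin n ⊕ Fin n → F),
          ∑ c : {a : Fin n ⊕ Fin n // j ≤ ordIdx n a}, x.val a.val c.val * g c.val
            = ∑ c : Fin n ⊕ Fin n, x.val a.val c * g c := by
        intro x hx a g
        rw [← Finset.sum_subtype (Finset.univ.filter (fun c => j ≤ ordIdx n c))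
          (by intro c; simp) (fun c => x.val a.val c * g c)]
        apply Finset.sum_subset (Finset.filter_subset _ _)
        intro c _ hc
        have hc' : ordIdx n c < j := by
          simp only [Finset.mem_filter, Finset.mem_univ, true_and, not_le] at hc
          exact hc
        rw [(ih x hx c hc').1 a.val (lt_of_lt_of_le hc' a.2), zero_mul]
      letI : MulAction ↥Q X :=
        { one_smul := by
            intro v
            funext a
            rw [smul_def]
            rw [show (((1 : ↥Q) : SpGrp n F)).val = (1 : Matrix (Fin n ⊕ Fin n) (Fin n ⊕ Fin n) F)
              from rfl]
            rw [Finset.sum_eq_single a]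
            · rw [Matrix.one_apply_eq, one_mul]
            · intro c _ hca
              rw [Matrix.one_apply_ne (fun hh => hca (Subtype.ext hh.symm)), zero_mul]
            · exact fun ha => absurd (Finset.mem_univ a) ha
          mul_smul := by
            intro x y v
            funext a
            rw [smul_def, smul_def]
            have hxy : (((x * y : ↥Q)) : SpGrp n F).val
                = ((x : SpGrp n F)).val * ((y : SpGrp n F)).val := rfl
            calc ∑ c : {a : Fin n ⊕ Fin n // j ≤ ordIdx n a},
                  ((x * y : ↥Q) : SpGrp n F).val a.val c.val * v c
                = ∑ c : {a : Fin n ⊕ Fin n // j ≤ ordIdx n a},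
                    (∑ b : Fin n ⊕ Fin n, (x : SpGrp n F).val a.val b
                      * (y : SpGrp n F).val b c.val) * v c := by
                  simp_rw [hxy, Matrix.mul_apply]
              _ = ∑ c : {a : Fin n ⊕ Fin n // j ≤ ordIdx n a}, ∑ b : Fin n ⊕ Fin n,
                    (x : SpGrp n F).val a.val b * ((y : SpGrp n F).val b c.val * v c) := by
                  simp_rw [Finset.sum_mul, mul_assoc]
              _ = ∑ b : Fin n ⊕ Fin n, ∑ c : {a : Fin n ⊕ Fin n // j ≤ ordIdx n a},
                    (x : SpGrp n F).val a.val b * ((y : SpGrp n F).val b c.val * v c) :=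
                  Finset.sum_comm
              _ = ∑ b : Fin n ⊕ Fin n, (x : SpGrp n F).val a.val b
                    * (∑ c : {a : Fin n ⊕ Fin n // j ≤ ordIdx n a},
                        (y : SpGrp n F).val b c.val * v c) := by
                  simp_rw [Finset.mul_sum]
              _ = ∑ bb : {a : Fin n ⊕ Fin n // j ≤ ordIdx n a}, (x : SpGrp n F).val a.val bb.val
                    * (∑ c : {a : Fin n ⊕ Fin n // j ≤ ordIdx n a},
                        (y : SpGrp n F).val bb.val c.val * v c) :=
                  (hsum (x : SpGrp n F) x.2 a _).symm
              _ = ∑ bb : {a : Fin n ⊕ Fin n // j ≤ ordIdx n a}, (x : SpGrp n F).val a.val bb.val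
                    * (y • v) bb := rfl }
      have h0fix : (0 : X) ∈ MulAction.fixedPoints ↥Q X := by
        intro g
        funext a
        rw [smul_def]
        exact Finset.sum_eq_zero fun c _ => mul_zero _
      have hpX : p ∣ Nat.card X := by
        haveI : Nonempty {a : Fin n ⊕ Fin n // j ≤ ordIdx n a} := ⟨⟨b₀, ge_of_eq hb₀⟩⟩
        rw [hX, Nat.card_eq_fintype_card, Fintype.card_fun, hF]
        exact dvd_pow (dvd_pow_self p (by omega)) Fintype.card_ne_zero
      obtain ⟨v, hvfix, hv0⟩ :=
        hQ.exists_fixed_point_of_prime_dvd_card_of_fixed_point X hpX h0fix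
      have hveq : ∀ (x : SpGrp n F), x ∈ Q → ∀ (aval : Fin n ⊕ Fin n) (ha : j ≤ ordIdx n aval),
          ∑ c : {a : Fin n ⊕ Fin n // j ≤ ordIdx n a}, x.val aval c.val * v c
            = v ⟨aval, ha⟩ := by
        intro x hx aval ha
        exact congrFun (hvfix ⟨x, hx⟩) ⟨aval, ha⟩
      have hugen : ∀ (B : Matrix (Fin n) (Fin n) F) (hB : Bᵀ = B) (aval : Fin n ⊕ Fin n)
          (ha : j ≤ ordIdx n aval),
          ∑ c : {a : Fin n ⊕ Fin n // j ≤ ordIdx n a},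
            (fromBlocks 1 B 0 1 : Matrix (Fin n ⊕ Fin n) (Fin n ⊕ Fin n) F) aval c.val * v c
            = v ⟨aval, ha⟩ :=
        fun B hB aval ha => hveq (uElt n F B hB) (hle (uElt_mem_range n F B hB)) aval ha
      have hdgen : ∀ (s t : Fin n) (hst : s < t) (aval : Fin n ⊕ Fin n)
          (ha : j ≤ ordIdx n aval),
          ∑ c : {a : Fin n ⊕ Fin n // j ≤ ordIdx n a},
            (fromBlocks (1 + Matrix.single s t (1 : F)) 0 0
              ((1 - Matrix.single s t (1 : F))ᵀ)
              : Matrix (Fin n ⊕ Fin n) (Fin n ⊕ Fin n) F) aval c.val * v c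
            = v ⟨aval, ha⟩ :=
        fun s t hst aval ha => hveq (dElt n F (elemUp n F s t hst))
          (hle (dElt_mem_range n F (elemUp n F s t hst))) aval ha
      have hsupp : ∀ c : {a : Fin n ⊕ Fin n // j ≤ ordIdx n a}, c.val ≠ b₀ → v c = 0 := by
        rcases Nat.lt_or_ge j n with hjn | hjn
        · -- phase 1
          set j₀ : Fin n := ⟨j, hjn⟩ with hj₀
          have hmemj : j ≤ ordIdx n (Sum.inl j₀) := le_rfl
          have hb₀' : b₀ = Sum.inl j₀ := ordIdx_injective n (by rw [hb₀, ordIdx_inl])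
          -- claim A : second-block coordinates vanish
          have hA : ∀ k : Fin n, ∀ hk : j ≤ ordIdx n (Sum.inr k), v ⟨Sum.inr k, hk⟩ = 0 := by
            intro k hk
            set Bm : Matrix (Fin n) (Fin n) F :=
              Matrix.of (fun s t => if (s = j₀ ∧ t = k) ∨ (s = k ∧ t = j₀) then (1 : F) else 0)
              with hBm
            have hBmsym : Bmᵀ = Bm := by
              ext s t
              rw [transpose_apply]
              show (if (t = j₀ ∧ s = k) ∨ (t = k ∧ s = j₀) then (1 : F) else 0)
                = (if (s = j₀ ∧ t = k) ∨ (s = k ∧ t = j₀) then (1 : F) else 0)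
              exact if_congr (by tauto) rfl rfl
            have hsum1 := hugen Bm hBmsym (Sum.inl j₀) hmemj
            have hsplit : (∑ c : {a : Fin n ⊕ Fin n // j ≤ ordIdx n a},
                (fromBlocks 1 Bm 0 1 : Matrix (Fin n ⊕ Fin n) (Fin n ⊕ Fin n) F)
                  (Sum.inl j₀) c.val * v c)
                = v ⟨Sum.inl j₀, hmemj⟩ + v ⟨Sum.inr k, hk⟩ := by
              rw [Finset.sum_eq_add_of_mem (⟨Sum.inl j₀, hmemj⟩ : {a // j ≤ ordIdx n a})
                ⟨Sum.inr k, hk⟩ (Finset.mem_univ _) (Finset.mem_univ _)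
                (by intro hh; simp [Subtype.ext_iff] at hh)
                ?_]
              · congr 1
                · show (fromBlocks 1 Bm 0 1 : Matrix (Fin n ⊕ Fin n) (Fin n ⊕ Fin n) F)
                      (Sum.inl j₀) (Sum.inl j₀) * v ⟨Sum.inl j₀, hmemj⟩ = _
                  rw [fromBlocks_apply₁₁, Matrix.one_apply_eq, one_mul]
                · show (fromBlocks 1 Bm 0 1 : Matrix (Fin n ⊕ Fin n) (Fin n ⊕ Fin n) F)
                      (Sum.inl j₀) (Sum.inr k) * v ⟨Sum.inr k, hk⟩ = _
                  rw [fromBlocks_apply₁₂]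
                  show (if (j₀ = j₀ ∧ k = k) ∨ (j₀ = k ∧ k = j₀) then (1 : F) else 0) * _ = _
                  rw [if_pos (Or.inl ⟨rfl, rfl⟩), one_mul]
              · rintro ⟨cv | cv, hcm⟩ - ⟨hne1, hne2⟩
                · have hcvne : cv ≠ j₀ := fun hh => hne1 (Subtype.ext (congrArg Sum.inl hh))
                  show (fromBlocks 1 Bm 0 1 : Matrix (Fin n ⊕ Fin n) (Fin n ⊕ Fin n) F)
                      (Sum.inl j₀) (Sum.inl cv) * _ = 0
                  rw [fromBlocks_apply₁₁, Matrix.one_apply_ne (fun hh => hcvne hh.symm), zero_mul]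
                · have hcvne : cv ≠ k := fun hh => hne2 (Subtype.ext (congrArg Sum.inr hh))
                  show (fromBlocks 1 Bm 0 1 : Matrix (Fin n ⊕ Fin n) (Fin n ⊕ Fin n) F)
                      (Sum.inl j₀) (Sum.inr cv) * _ = 0
                  rw [fromBlocks_apply₁₂]
                  show (if (j₀ = j₀ ∧ cv = k) ∨ (j₀ = k ∧ cv = j₀) then (1 : F) else 0) * _ = 0
                  rw [if_neg (by
                    rintro (⟨-, rfl⟩ | ⟨hh1, hh2⟩)
                    · exact hcvne rfl
                    · exact hcvne (hh2.trans hh1)), zero_mul]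
            rw [hsplit] at hsum1
            exact add_eq_left.mp hsum1
          -- claim B : later first-block coordinates vanish
          have hBc : ∀ t : Fin n, j < (t : ℕ) → ∀ ht' : j ≤ ordIdx n (Sum.inl t),
              v ⟨Sum.inl t, ht'⟩ = 0 := by
            intro t ht ht'
            have hst : j₀ < t := by rw [Fin.lt_def]; exact ht
            have hsum1 := hdgen j₀ t hst (Sum.inl j₀) hmemj
            have hsplit : (∑ c : {a : Fin n ⊕ Fin n // j ≤ ordIdx n a},
                (fromBlocks (1 + Matrix.single j₀ t (1 : F)) 0 0
                  ((1 - Matrix.single j₀ t (1 : F))ᵀ)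
                  : Matrix (Fin n ⊕ Fin n) (Fin n ⊕ Fin n) F) (Sum.inl j₀) c.val * v c)
                = v ⟨Sum.inl j₀, hmemj⟩ + v ⟨Sum.inl t, ht'⟩ := by
              rw [Finset.sum_eq_add_of_mem (⟨Sum.inl j₀, hmemj⟩ : {a // j ≤ ordIdx n a})
                ⟨Sum.inl t, ht'⟩ (Finset.mem_univ _) (Finset.mem_univ _)
                (by
                  intro hh
                  have := congrArg Subtype.val hh
                  rw [Sum.inl.injEq] at this
                  exact absurd (congrArg Fin.val this) (by omega))
                ?_]
              · congr 1
                · show (fromBlocks (1 + Matrix.single j₀ t (1 : F)) 0 0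
                      ((1 - Matrix.single j₀ t (1 : F))ᵀ)
                      : Matrix (Fin n ⊕ Fin n) (Fin n ⊕ Fin n) F)
                      (Sum.inl j₀) (Sum.inl j₀) * v ⟨Sum.inl j₀, hmemj⟩ = _
                  rw [fromBlocks_apply₁₁, Matrix.add_apply, Matrix.one_apply_eq,
                    Matrix.single_apply_of_ne _ _ _ _ _
                      (by rintro ⟨-, rfl⟩; exact absurd hst (lt_irrefl _)),
                    add_zero, one_mul]
                · show (fromBlocks (1 + Matrix.single j₀ t (1 : F)) 0 0
                      ((1 - Matrix.single j₀ t (1 : F))ᵀ)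
                      : Matrix (Fin n ⊕ Fin n) (Fin n ⊕ Fin n) F)
                      (Sum.inl j₀) (Sum.inl t) * v ⟨Sum.inl t, ht'⟩ = _
                  rw [fromBlocks_apply₁₁, Matrix.add_apply,
                    Matrix.one_apply_ne (ne_of_lt hst),
                    Matrix.single_apply_same, zero_add, one_mul]
              · rintro ⟨cv | cv, hcm⟩ - ⟨hne1, hne2⟩
                · have hcv1 : cv ≠ j₀ := fun hh => hne1 (Subtype.ext (congrArg Sum.inl hh))
                  have hcv2 : cv ≠ t := fun hh => hne2 (Subtype.ext (congrArg Sum.inl hh))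
                  show (fromBlocks (1 + Matrix.single j₀ t (1 : F)) 0 0
                      ((1 - Matrix.single j₀ t (1 : F))ᵀ)
                      : Matrix (Fin n ⊕ Fin n) (Fin n ⊕ Fin n) F)
                      (Sum.inl j₀) (Sum.inl cv) * _ = 0
                  rw [fromBlocks_apply₁₁, Matrix.add_apply,
                    Matrix.one_apply_ne (fun hh => hcv1 hh.symm),
                    Matrix.single_apply_of_ne _ _ _ _ _
                      (by rintro ⟨-, rfl⟩; exact hcv2 rfl),
                    add_zero, zero_mul]
                · show (fromBlocks (1 + Matrix.single j₀ t (1 : F)) 0 0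
                      ((1 - Matrix.single j₀ t (1 : F))ᵀ)
                      : Matrix (Fin n ⊕ Fin n) (Fin n ⊕ Fin n) F)
                      (Sum.inl j₀) (Sum.inr cv) * _ = 0
                  rw [fromBlocks_apply₁₂, Matrix.zero_apply, zero_mul]
            rw [hsplit] at hsum1
            exact add_eq_left.mp hsum1
          rintro ⟨cv | cv, hcm⟩ hne
          · have hcv : (cv : ℕ) ≠ j := by
              intro hh
              exact hne (by rw [hb₀']; exact congrArg Sum.inl (Fin.ext hh))
            have hcm' : j ≤ (cv : ℕ) := by rw [ordIdx_inl] at hcm; exact hcm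
            exact hBc cv (by omega) hcm
          · exact hA cv hcm
        · -- phase 2
          have hKlt : 2 * n - 1 - j < n := by omega
          set K : Fin n := ⟨2 * n - 1 - j, hKlt⟩ with hK
          have hKval : (K : ℕ) = 2 * n - 1 - j := rfl
          have hb₀' : b₀ = Sum.inr K :=
            ordIdx_injective n (by rw [hb₀, ordIdx_inr, hKval]; omega)
          have hmemK : j ≤ ordIdx n (Sum.inr K) := by rw [ordIdx_inr, hKval]; omega
          have hC : ∀ s : Fin n, (s : ℕ) < (K : ℕ) → ∀ hs' : j ≤ ordIdx n (Sum.inr s),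
              v ⟨Sum.inr s, hs'⟩ = 0 := by
            intro s hs hs'
            have hst : s < K := by rw [Fin.lt_def]; exact hs
            have hsum1 := hdgen s K hst (Sum.inr K) hmemK
            have hsplit : (∑ c : {a : Fin n ⊕ Fin n // j ≤ ordIdx n a},
                (fromBlocks (1 + Matrix.single s K (1 : F)) 0 0
                  ((1 - Matrix.single s K (1 : F))ᵀ)
                  : Matrix (Fin n ⊕ Fin n) (Fin n ⊕ Fin n) F) (Sum.inr K) c.val * v c)
                = v ⟨Sum.inr K, hmemK⟩ + -(v ⟨Sum.inr s, hs'⟩) := by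
              rw [Finset.sum_eq_add_of_mem (⟨Sum.inr K, hmemK⟩ : {a // j ≤ ordIdx n a})
                ⟨Sum.inr s, hs'⟩ (Finset.mem_univ _) (Finset.mem_univ _)
                (by
                  intro hh
                  have := congrArg Subtype.val hh
                  rw [Sum.inr.injEq] at this
                  exact absurd (congrArg Fin.val this) (by omega))
                ?_]
              · congr 1
                · show (fromBlocks (1 + Matrix.single s K (1 : F)) 0 0
                      ((1 - Matrix.single s K (1 : F))ᵀ)
                      : Matrix (Fin n ⊕ Fin n) (Fin n ⊕ Fin n) F)
                      (Sum.inr K) (Sum.inr K) * v ⟨Sum.inr K, hmemK⟩ = _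
                  rw [fromBlocks_apply₂₂, transpose_apply, Matrix.sub_apply,
                    Matrix.one_apply_eq,
                    Matrix.single_apply_of_ne _ _ _ _ _
                      (by rintro ⟨rfl, -⟩; exact absurd hst (lt_irrefl _)),
                    sub_zero, one_mul]
                · show (fromBlocks (1 + Matrix.single s K (1 : F)) 0 0
                      ((1 - Matrix.single s K (1 : F))ᵀ)
                      : Matrix (Fin n ⊕ Fin n) (Fin n ⊕ Fin n) F)
                      (Sum.inr K) (Sum.inr s) * v ⟨Sum.inr s, hs'⟩ = _
                  rw [fromBlocks_apply₂₂, transpose_apply, Matrix.sub_apply,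
                    Matrix.one_apply_ne (ne_of_lt hst),
                    Matrix.single_apply_same, zero_sub, neg_one_mul]
              · rintro ⟨cv | cv, hcm⟩ - ⟨hne1, hne2⟩
                · exfalso
                  rw [ordIdx_inl] at hcm
                  have := cv.2
                  omega
                · have hcv1 : cv ≠ K := fun hh => hne1 (Subtype.ext (congrArg Sum.inr hh))
                  have hcv2 : cv ≠ s := fun hh => hne2 (Subtype.ext (congrArg Sum.inr hh))
                  show (fromBlocks (1 + Matrix.single s K (1 : F)) 0 0
                      ((1 - Matrix.single s K (1 : F))ᵀ)
                      : Matrix (Fin n ⊕ Fin n) (Fin n ⊕ Fin n) F)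
                      (Sum.inr K) (Sum.inr cv) * _ = 0
                  rw [fromBlocks_apply₂₂, transpose_apply, Matrix.sub_apply,
                    Matrix.one_apply_ne hcv1,
                    Matrix.single_apply_of_ne _ _ _ _ _
                      (by rintro ⟨rfl, -⟩; exact hcv2 rfl),
                    sub_zero, zero_mul]
            rw [hsplit] at hsum1
            have := add_eq_left.mp hsum1
            exact neg_eq_zero.mp this
          rintro ⟨cv | cv, hcm⟩ hne
          · exfalso
            rw [ordIdx_inl] at hcm
            have := cv.2
            omega
          · have hcv : (cv : ℕ) ≠ (K : ℕ) := by
              intro hh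
              exact hne (by rw [hb₀']; exact congrArg Sum.inr (Fin.ext hh))
            have hcm' := hcm
            rw [ordIdx_inr] at hcm'
            have := cv.2
            exact hC cv (by omega) hcm
      -- the nonvanishing coefficient
      have hlam : v ⟨b₀, ge_of_eq hb₀⟩ ≠ 0 := by
        intro h0
        apply hv0
        funext c
        by_cases hc : c.val = b₀
        · have : c = ⟨b₀, ge_of_eq hb₀⟩ := Subtype.ext hc
          rw [this]
          exact h0.symm
        · exact (hsupp c hc).symm
      -- conclusion for every x ∈ Q
      intro x hx b hb
      rcases Nat.lt_or_ge (ordIdx n b) j with hcase | hcase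
      · exact ih x hx b hcase
      have hbb : b = b₀ := ordIdx_injective n (by rw [hb₀]; omega)
      subst hbb
      have hcol : ∀ (aval : Fin n ⊕ Fin n) (ha : j ≤ ordIdx n aval),
          x.val aval b * v ⟨b, ge_of_eq hb₀⟩ = v ⟨aval, ha⟩ := by
        intro aval ha
        have h1 := hveq x hx aval ha
        have hsplit : (∑ c : {a : Fin n ⊕ Fin n // j ≤ ordIdx n a}, x.val aval c.val * v c)
            = x.val aval b * v ⟨b, ge_of_eq hb₀⟩ :=
          Finset.sum_eq_single (⟨b, ge_of_eq hb₀⟩ : {a // j ≤ ordIdx n a})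
            (fun c _ hcne => by rw [hsupp c (fun hh => hcne (Subtype.ext hh)), mul_zero])
            (fun ha' => absurd (Finset.mem_univ _) ha')
        rw [hsplit] at h1
        exact h1
      constructor
      · intro a ha
        have haj : j ≤ ordIdx n a := by omega
        have h1 := hcol a haj
        have h2 : v ⟨a, haj⟩ = 0 := hsupp _ (by
          intro hh
          have hh' : a = b := hh
          rw [hh'] at ha
          omega)
        rw [h2] at h1
        exact (mul_eq_zero.mp h1).resolve_right hlam
      · have h1 := hcol b (by omega)
        exact mul_right_cancel₀ hlam (h1.trans (one_mul _).symm)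
  intro x hx a b hab
  rcases eq_or_ne a b with rfl | hne
  · rw [Matrix.one_apply_eq]
    exact (main (ordIdx n a + 1) x hx a (Nat.lt_succ_self _)).2
  · have hlt : ordIdx n b < ordIdx n a :=
      lt_of_le_of_ne hab (fun hh => hne (ordIdx_injective n hh).symm)
    rw [Matrix.one_apply_ne hne]
    exact (main (ordIdx n b + 1) x hx b (Nat.lt_succ_self _)).1 a hlt

end SylowPSpProof

open SylowPSpProof


/-- For any prime `p` and `q = p^r`: every Sylow `p`-subgroup of `PSp(2n, q)`
is isomorphic to `Sym(n, p^r) ⋊ Up_n(F_{p^r})` (with `A` acting by `B ↦ A B Aᵀ`); moreover the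
set of matrices `[[A, 0], [0, (A⁻¹)ᵀ]] * [[1, B], [0, 1]]` with `A` unitriangular and `B`
symmetric is such a Sylow `p`-subgroup inside `Sp(2n, q)`, mapped isomorphically into
`PSp(2n, q)`. -/
theorem sylow_p_PSp (p r n : ℕ) (hp : p.Prime) (hr : 1 ≤ r)
    (F : Type*) [Field F] [Fintype F] (hF : Fintype.card F = p ^ r) :
    (∀ P : Sylow p (PSpGroup n F),
      Nonempty (↥(P : Subgroup (PSpGroup n F)) ≃* symSemidirect n F)) ∧
    (∃ P : Sylow p ↥(Matrix.symplecticGroup (Fin n) F),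
      ((P : Subgroup ↥(Matrix.symplecticGroup (Fin n) F)) :
          Set ↥(Matrix.symplecticGroup (Fin n) F)) =
        {M : ↥(Matrix.symplecticGroup (Fin n) F) |
          ∃ A : ↥(UpGroup n F), ∃ B : Matrix (Fin n) (Fin n) F, Bᵀ = B ∧
          M.val = Matrix.fromBlocks A.val.val 0 0 ((A.val⁻¹).val)ᵀ *
            Matrix.fromBlocks 1 B 0 1} ∧
      ∃ P' : Sylow p (PSpGroup n F),
        (P' : Subgroup (PSpGroup n F)) = Subgroup.map
          (QuotientGroup.mk' (Subgroup.center ↥(Matrix.symplecticGroup (Fin n) F)))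
          (P : Subgroup _) ∧
        Function.Injective fun x : ↥(P : Subgroup ↥(Matrix.symplecticGroup (Fin n) F)) =>
          QuotientGroup.mk' (Subgroup.center ↥(Matrix.symplecticGroup (Fin n) F)) x.val) := by
  classical
  haveI := Fact.mk hp
  haveI : CharP F p := charP_of_card F p r hp hr hF
  have hmax : ∀ {Q : Subgroup (SpGrp n F)}, IsPGroup p ↥Q →
      (psi n F).range ≤ Q → Q = (psi n F).range := by
    intro Q hQ hle
    refine le_antisymm (fun x hx => ?_) hle
    exact mem_range_of_tri n F x (key_tri n F p hp r hr hF Q hQ hle x hx)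
  set P : Sylow p (SpGrp n F) :=
    ⟨(psi n F).range, isPGroup_range n F p hp, hmax⟩ with hPdef
  have hPcoe : (P : Subgroup (SpGrp n F)) = (psi n F).range := rfl
  -- injectivity of the quotient map on the range
  have hinj : ∀ x y : SpGrp n F, x ∈ (psi n F).range → y ∈ (psi n F).range →
      QuotientGroup.mk' (Subgroup.center (SpGrp n F)) x
        = QuotientGroup.mk' (Subgroup.center (SpGrp n F)) y → x = y := by
    intro x y hx hy hxy
    obtain ⟨z, hzc, hzz⟩ := (QuotientGroup.mk'_eq_mk' (Subgroup.center (SpGrp n F))).mp hxy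
    have hz1 : z = x⁻¹ * y := by rw [← hzz]; group
    have hzr : z ∈ (psi n F).range := by
      rw [hz1]; exact mul_mem (inv_mem hx) hy
    have hz2 := range_center n F z hzr hzc
    rw [hz2, mul_one] at hzz
    exact hzz
  have hsurj := QuotientGroup.mk'_surjective (Subgroup.center (SpGrp n F))
  haveI : Finite (PSpGroup n F) :=
    inferInstanceAs (Finite (_ ⧸ Subgroup.center (SpGrp n F)))
  set P' : Sylow p (PSpGroup n F) := Sylow.mapSurjective hsurj P with hP'def
  have hP'coe : (P' : Subgroup (PSpGroup n F))
      = Subgroup.map (QuotientGroup.mk' (Subgroup.center (SpGrp n F))) (P : Subgroup _) :=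
    Sylow.coe_mapSurjective hsurj P
  -- isomorphisms
  have e1 : symSemidirect n F ≃* ↥((psi n F).range) := MonoidHom.ofInjective (psi_injective n F)
  set g0 : ↥((psi n F).range) →* PSpGroup n F :=
    (QuotientGroup.mk' (Subgroup.center (SpGrp n F))).comp ((psi n F).range.subtype) with hg0def
  have hg0inj : Function.Injective g0 := by
    intro a b hab
    exact Subtype.ext (hinj a.val b.val a.2 b.2 hab)
  have e2 : ↥((psi n F).range) ≃* ↥(g0.range) := MonoidHom.ofInjective hg0inj
  have hg0range : g0.range
      = Subgroup.map (QuotientGroup.mk' (Subgroup.center (SpGrp n F))) (psi n F).range := by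
    rw [hg0def]
    exact (MonoidHom.range_comp _ _).trans (congrArg _ (Subgroup.range_subtype _))
  constructor
  · intro P₂
    haveI : Finite (Sylow p (PSpGroup n F)) :=
      Finite.of_injective (fun Q => ((Q : Subgroup (PSpGroup n F)) : Set (PSpGroup n F)))
        (fun Q1 Q2 h => Sylow.ext (SetLike.coe_injective h))
    have e3 : ↥(P₂ : Subgroup (PSpGroup n F)) ≃* ↥(P' : Subgroup (PSpGroup n F)) :=
      Sylow.equiv P₂ P'
    have e4 : ↥(P' : Subgroup (PSpGroup n F)) ≃* ↥(g0.range) :=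
      MulEquiv.subgroupCongr (by rw [hP'coe, hPcoe, ← hg0range])
    exact ⟨((e3.trans e4).trans e2.symm).trans e1.symm⟩
  · refine ⟨P, ?_, P', hP'coe, ?_⟩
    · ext M
      simp only [SetLike.mem_coe, Set.mem_setOf_eq]
      exact mem_psi_range_iff' n F M
    · intro a b hab
      exact Subtype.ext (hinj a.val b.val a.2 b.2 hab)
end
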